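/- Over the phase hyperfield P, the polynomial p(T) = T^2 + T + 1 has infinitely many roots: every a = e^{iθ} with π/2 < θ < 3π/2 is a root of p. -/

import Mathlib

open Complex

/-- Hyperaddition of the phase hyperfield `P = S¹ ∪ {0} ⊆ ℂ` (realized as `ℂ/ℝ_{>0}`):
`c ∈ a ⊞ b` iff `c` is the normalization (a unit vector, or `0`) of `s•a + t•b` for some
positive reals `s, t`.  For unit (or zero) complex numbers this reproduces the rules
`x ⊞ 0 = {x}`, `a ⊞ (-a) = {0, a, -a}`, and `a ⊞ b = ` the open short arc between `a` and
`b` otherwise. -/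
def phadd (a b : ℂ) : Set ℂ :=
  {c | ∃ s t : ℝ, 0 < s ∧ 0 < t ∧
    ((s • a + t • b = 0 ∧ c = 0) ∨
      (s • a + t • b ≠ 0 ∧ c = (s • a + t • b) / ((‖s • a + t • b‖ : ℝ) : ℂ)))}

/-- The hypersum `⊞_{i=0}^n f i` in the phase hyperfield. -/
def phsum (f : ℕ → ℂ) : ℕ → Set ℂ
  | 0 => {f 0}
  | n + 1 => ⋃ b ∈ phsum f n, phadd b (f (n + 1))

/-- The key algebraic identity: `1 + (-2cos θ)·e^{iθ} + e^{2iθ} = 0`. -/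
lemma key_id (θ : ℝ) :
    (1 : ℂ) + ((-2 * Real.cos θ : ℝ) : ℂ) * Complex.exp (θ * I) + (Complex.exp (θ * I)) ^ 2 = 0 := by
  have h : ((Real.sin θ : ℂ)) ^ 2 + ((Real.cos θ : ℂ)) ^ 2 = 1 := by
    have := Real.sin_sq_add_cos_sq θ
    exact_mod_cast this
  rw [Complex.exp_mul_I, ← Complex.ofReal_cos, ← Complex.ofReal_sin]
  push_cast [← Complex.ofReal_sin, ← Complex.ofReal_cos]
  linear_combination ((Real.sin θ : ℂ))^2 * Complex.I_sq - h

/-- Every `a = e^{iθ}` with `π/2 < θ < 3π/2` is a root of `T² + T + 1`. -/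
lemma main_root (θ : ℝ) (h1 : Real.pi / 2 < θ) (h2 : θ < 3 * Real.pi / 2) :
    0 ∈ phsum (fun i => (Complex.exp (θ * Complex.I)) ^ i) 2 := by
  set a : ℂ := Complex.exp (θ * Complex.I) with ha
  have hcos : Real.cos θ < 0 := by
    apply Real.cos_neg_of_pi_div_two_lt_of_lt h1
    linarith [Real.pi_pos]
  have ht : (0:ℝ) < -2 * Real.cos θ := by linarith
  have hane : a ≠ 0 := Complex.exp_ne_zero _
  have habs : ‖a‖ = 1 := Complex.norm_exp_ofReal_mul_I θ
  have hkey : (1 : ℝ) • ((1:ℂ)) + (-2 * Real.cos θ : ℝ) • a = -a ^ 2 := by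
    have h := key_id θ
    rw [Complex.real_smul, Complex.real_smul]
    push_cast
    push_cast at h
    linear_combination h
  have hne : -a ^ 2 ≠ 0 := neg_ne_zero.2 (pow_ne_zero 2 hane)
  have habs2 : ‖-a ^ 2‖ = 1 := by
    rw [norm_neg, norm_pow, habs, one_pow]
  have m1 : -a ^ 2 ∈ phadd ((fun i => a ^ i) 0) ((fun i => a ^ i) 1) := by
    refine ⟨1, -2 * Real.cos θ, one_pos, ht, Or.inr ⟨?_, ?_⟩⟩
    · simp only [pow_zero, pow_one]
      rw [hkey]
      exact hne
    · simp only [pow_zero, pow_one]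
      rw [hkey, habs2]
      simp
  have m2 : (0:ℂ) ∈ phadd (-a ^ 2) ((fun i => a ^ i) 2) := by
    exact ⟨1, 1, one_pos, one_pos, Or.inl ⟨by simp, rfl⟩⟩
  have e2 : phsum (fun i => a ^ i) 2 = ⋃ b ∈ phsum (fun i => a ^ i) 1, phadd b ((fun i => a ^ i) 2) := rfl
  have e1 : phsum (fun i => a ^ i) 1 = ⋃ b ∈ ({(fun i => a ^ i) 0} : Set ℂ), phadd b ((fun i => a ^ i) 1) := rfl
  rw [e2]
  exact Set.mem_biUnion (by rw [e1]; exact Set.mem_biUnion rfl m1) m2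

/-- Over the phase hyperfield, the polynomial `p(T) = T² + T + 1` has infinitely many
roots: every `a = e^{iθ}` with `π/2 < θ < 3π/2` is a root of `p`
(i.e. `0 ∈ a² ⊞ a ⊞ 1`). -/
theorem phase_infinitely_many_roots :
    (∀ θ : ℝ, Real.pi / 2 < θ → θ < 3 * Real.pi / 2 →
      0 ∈ phsum (fun i => (Complex.exp (θ * Complex.I)) ^ i) 2) ∧
    {a : ℂ | 0 ∈ phsum (fun i => a ^ i) 2}.Infinite := by
  constructor
  · exact main_root
  · have hsub : (fun θ : ℝ => Complex.exp (θ * Complex.I)) '' Set.Ioo (Real.pi / 2) Real.pi ⊆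
        {a : ℂ | 0 ∈ phsum (fun i => a ^ i) 2} := by
      rintro _ ⟨θ, ⟨hθ1, hθ2⟩, rfl⟩
      exact main_root θ hθ1 (by linarith [Real.pi_pos])
    have hinj : Set.InjOn (fun θ : ℝ => Complex.exp (θ * Complex.I))
        (Set.Ioo (Real.pi / 2) Real.pi) := by
      intro x hx y hy hxy
      have hre : Real.cos x = Real.cos y := by
        have := congrArg Complex.re hxy
        simpa [Complex.exp_ofReal_mul_I_re] using this
      have hpi := Real.pi_pos
      exact Real.injOn_cos ⟨by linarith [hx.1], le_of_lt hx.2⟩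
        ⟨by linarith [hy.1], le_of_lt hy.2⟩ hre
    have hIoo : (Set.Ioo (Real.pi / 2) Real.pi).Infinite :=
      Set.infinite_coe_iff.1 (Set.Ioo.infinite (by linarith [Real.pi_pos]))
    exact ((hIoo.image hinj).mono hsub)
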